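/- arXiv:1709.06961 — 2 statements merged into one kernel-verified Lean document; each statement's English description precedes it below -/
import Mathlib

section
/- Fix K ≥ 2 and a vector V ∈ ℝ^K. With H, S, Σ_∞ defined as in the context and a := √(1 + VᵀV), the matrix Σ_∞ satisfies the quadratic identity Σ_∞² − (2 + 2a²)·Σ_∞ + 4a²·I_L = 0, where I_L is the L×L identity. -/
open Matrix Kronecker

/-- The set of strictly ordered index pairs `P = {(i,j) : 1 ≤ i < j ≤ K}`. -/
abbrev OrderedPairs (K : ℕ) : Type := {p : Fin K × Fin K // p.1 < p.2}

/-- The selection matrix `H` picking the strictly upper-triangular coordinates: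
`H_{p,q} = 1` if `q = p` and `0` otherwise. -/
noncomputable abbrev selH (K : ℕ) : Matrix (OrderedPairs K) (Fin K × Fin K) ℝ :=
  Matrix.of fun p q => if q = p.1 then 1 else 0

/-- The commutation matrix `S`: `S_{(i,j),(k,l)} = 1` if `(k,l) = (j,i)` and `0` otherwise. -/
noncomputable abbrev commS (K : ℕ) : Matrix (Fin K × Fin K) (Fin K × Fin K) ℝ :=
  Matrix.of fun p q => if q = p.swap then 1 else 0

section Aux
variable {K : ℕ} (V : Fin K → ℝ)

lemma commS_mul_apply (X : Matrix (Fin K × Fin K) (Fin K × Fin K) ℝ) (p q : Fin K × Fin K) :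
    (commS K * X) p q = X p.swap q := by
  simp only [Matrix.mul_apply, commS, Matrix.of_apply]
  rw [Finset.sum_eq_single p.swap]
  · simp
  · intro r _ hr; simp [hr]
  · simp

lemma mul_commS_apply (X : Matrix (Fin K × Fin K) (Fin K × Fin K) ℝ) (p q : Fin K × Fin K) :
    (X * commS K) p q = X p q.swap := by
  simp only [Matrix.mul_apply, commS, Matrix.of_apply]
  rw [Finset.sum_eq_single q.swap]
  · simp [Prod.swap_swap, eq_comm]
  · intro r _ hr
    have : q ≠ r.swap := by intro h; exact hr (by simp [h])
    simp [this]
  · simp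

/-- `C = I ⊗ V Vᵀ`. -/
noncomputable def Cmat : Matrix (Fin K × Fin K) (Fin K × Fin K) ℝ :=
  (1 : Matrix (Fin K) (Fin K) ℝ) ⊗ₖ Matrix.vecMulVec V V

lemma Cmat_apply (p q : Fin K × Fin K) :
    Cmat V p q = (if p.1 = q.1 then (1:ℝ) else 0) * (V p.2 * V q.2) := by
  simp [Cmat, Matrix.one_apply, Matrix.vecMulVec_apply, Matrix.kroneckerMap_apply]

lemma commS_mul_self : commS K * commS K = 1 := by
  ext p q
  simp only [Matrix.mul_apply, commS, Matrix.of_apply, Matrix.one_apply]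
  rw [Finset.sum_eq_single p.swap]
  · simp [eq_comm]
  · intro r _ hr; simp [hr]
  · simp

lemma Cmat_mul_Cmat : Cmat V * Cmat V = (∑ i, V i * V i) • Cmat V := by
  ext p q
  simp only [Matrix.mul_apply, Cmat_apply, Matrix.smul_apply, smul_eq_mul]
  rw [Fintype.sum_prod_type]
  simp only [ite_mul, mul_ite, one_mul, zero_mul, mul_zero]
  rw [Finset.sum_eq_single p.1]
  · simp only [if_pos rfl]
    by_cases h : p.1 = q.1 <;> simp [h, Finset.mul_sum, Finset.sum_mul] <;> ring_nf
    · exact Finset.sum_congr rfl fun i _ => by ring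
  · intro r _ hr; simp [Ne.symm hr]
  · simp

lemma CSC_apply (p q : Fin K × Fin K) :
    (Cmat V * commS K * Cmat V) p q = (V p.1 * V p.2) * (V q.1 * V q.2) := by
  rw [Matrix.mul_apply]
  simp only [mul_commS_apply, Cmat_apply, Prod.fst_swap, Prod.snd_swap]
  rw [Fintype.sum_prod_type]
  rw [Finset.sum_eq_single q.1]
  · rw [Finset.sum_eq_single p.1]
    · simp; ring
    · intro r _ hr; simp [Ne.symm hr]
    · simp
  · intro r _ hr; simp [hr]
  · simp

/-- The antisymmetrized matrix `A := (1 - S) C (1 - S)`. -/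
noncomputable def Amat : Matrix (Fin K × Fin K) (Fin K × Fin K) ℝ :=
  (1 - commS K) * Cmat V * (1 - commS K)

lemma commS_mul_CSC : commS K * (Cmat V * commS K * Cmat V) = Cmat V * commS K * Cmat V := by
  ext p q
  rw [commS_mul_apply, CSC_apply, CSC_apply]
  simp only [Prod.fst_swap, Prod.snd_swap]; ring

lemma oneSubS_mul_CSC : (1 - commS K) * (Cmat V * commS K * Cmat V) = 0 := by
  rw [sub_mul, one_mul, commS_mul_CSC, sub_self]

lemma oneSubS_sq : (1 - commS K) * (1 - commS K)
    = (2:ℝ) • ((1 : Matrix (Fin K × Fin K) (Fin K × Fin K) ℝ) - commS K) := by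
  have h := commS_mul_self (K := K)
  calc (1 - commS K) * (1 - commS K)
      = 1 - commS K - commS K + commS K * commS K := by noncomm_ring
    _ = (2:ℝ) • ((1 : Matrix (Fin K × Fin K) (Fin K × Fin K) ℝ) - commS K) := by
        rw [h]; module

lemma Amat_mul_Amat : Amat V * Amat V = (2 * ∑ i, V i * V i) • Amat V := by
  have h2 : Cmat V * (1 - commS K) * Cmat V
      = (∑ i, V i * V i) • Cmat V - Cmat V * commS K * Cmat V := by
    rw [mul_sub, mul_one, sub_mul, Cmat_mul_Cmat]
  have h3 : (1 - commS K) * ((∑ i, V i * V i) • Cmat V - Cmat V * commS K * Cmat V)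
      = (∑ i, V i * V i) • ((1 - commS K) * Cmat V) := by
    rw [mul_sub, oneSubS_mul_CSC, sub_zero, Matrix.mul_smul]
  calc Amat V * Amat V
      = (1 - commS K) * Cmat V * ((1 - commS K) * (1 - commS K)) * Cmat V * (1 - commS K) := by
        simp only [Amat, mul_assoc]
    _ = (2:ℝ) • ((1 - commS K) * (Cmat V * (1 - commS K) * Cmat V) * (1 - commS K)) := by
        rw [oneSubS_sq]; simp only [Matrix.mul_smul, Matrix.smul_mul, mul_assoc]
    _ = (2:ℝ) • ((∑ i, V i * V i) • Amat V) := by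
        rw [h2, h3, Matrix.smul_mul]; simp only [Amat, mul_assoc]
    _ = (2 * ∑ i, V i * V i) • Amat V := by rw [smul_smul]

lemma S_mul_Amat : commS K * Amat V = - Amat V := by
  have h : commS K * (1 - commS K) = -(1 - commS K) := by
    rw [mul_sub, mul_one, commS_mul_self]; abel
  rw [Amat, ← mul_assoc, ← mul_assoc, h, neg_mul, neg_mul]

lemma Amat_mul_S : Amat V * commS K = - Amat V := by
  have h : (1 - commS K) * commS K = -(1 - commS K) := by
    rw [sub_mul, one_mul, commS_mul_self]; abel
  rw [Amat, mul_assoc, mul_assoc, h]; simp only [mul_neg, mul_assoc]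

end Aux

section Aux2
variable {K : ℕ} (V : Fin K → ℝ)

/-- Projection onto diagonal coordinates. -/
noncomputable def Dg (K : ℕ) : Matrix (Fin K × Fin K) (Fin K × Fin K) ℝ :=
  Matrix.of fun p q => if p = q ∧ p.1 = p.2 then 1 else 0

lemma selHT_mul_selH : (selH K)ᵀ * selH K
    = Matrix.of fun p q => if p = q ∧ p.1 < p.2 then 1 else 0 := by
  ext p q
  simp only [Matrix.mul_apply, selH, Matrix.of_apply, Matrix.transpose_apply]
  by_cases hp : p.1 < p.2
  · rw [Finset.sum_eq_single (⟨p, hp⟩ : OrderedPairs K)]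
    · by_cases hq : q = p
      · simp [hq, hp]
      · simp [hq, Ne.symm hq, hp]
    · intro r _ hr
      have : p ≠ r.1 := by
        intro h; exact hr (by apply Subtype.ext; exact h.symm)
      simp [this]
    · simp
  · rw [Finset.sum_eq_zero]
    · simp [hp]
    · intro r _
      have : p ≠ r.1 := by
        intro h; exact hp (h ▸ r.2)
      simp [this]

lemma one_decomp : (1 : Matrix (Fin K × Fin K) (Fin K × Fin K) ℝ)
    = (selH K)ᵀ * selH K + commS K * ((selH K)ᵀ * selH K) * commS K + Dg K := by
  ext p q
  rw [Matrix.add_apply, Matrix.add_apply, mul_commS_apply, commS_mul_apply, selHT_mul_selH]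
  simp only [Matrix.of_apply, Dg, Matrix.one_apply, Prod.fst_swap, Prod.snd_swap]
  by_cases hpq : p = q
  · subst hpq
    rcases lt_trichotomy p.1 p.2 with h | h | h
    · simp [h, h.ne, not_lt_of_gt h]
    · simp [h, lt_irrefl]
    · simp [h, h.ne', not_lt_of_gt h]
  · have hsw : p.swap ≠ q.swap := fun h => hpq (Prod.swap_injective h)
    simp [hpq, hsw]

lemma Amat_mul_Dg : Amat V * Dg K = 0 := by
  ext p q
  rw [Matrix.mul_apply, Finset.sum_eq_single q]
  · by_cases h : q.1 = q.2
    · have hswap : q.swap = q := by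
        apply Prod.ext <;> simp [h]
      have h1 : Amat V p q.swap = - Amat V p q := by
        have := congrFun (congrFun (Amat_mul_S V) p) q
        rw [mul_commS_apply] at this
        simpa using this
      rw [hswap] at h1
      have h0 : Amat V p q = 0 := by linarith
      simp [Dg, h, h0]
    · simp [Dg, h]
  · intro r _ hr; simp [Dg, hr]
  · simp

lemma AQA : Amat V * ((selH K)ᵀ * selH K) * Amat V = (∑ i, V i * V i) • Amat V := by
  set Q := (selH K)ᵀ * selH K with hQ
  have hsum : Amat V * Q * Amat V + Amat V * (commS K * Q * commS K) * Amat V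
      + Amat V * Dg K * Amat V = Amat V * Amat V := by
    have : Amat V * (Q + commS K * Q * commS K + Dg K) * Amat V = Amat V * Amat V := by
      rw [← one_decomp, mul_one]
    rw [← this]; noncomm_ring
  have hmid : Amat V * (commS K * Q * commS K) * Amat V = Amat V * Q * Amat V := by
    calc Amat V * (commS K * Q * commS K) * Amat V
        = (Amat V * commS K) * Q * (commS K * Amat V) := by simp only [mul_assoc]
      _ = (- Amat V) * Q * (- Amat V) := by rw [Amat_mul_S, S_mul_Amat]
      _ = Amat V * Q * Amat V := by simp only [neg_mul, mul_neg, neg_neg]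
  rw [hmid, Amat_mul_Dg, zero_mul, add_zero, Amat_mul_Amat] at hsum
  have h2 : (2:ℝ) • (Amat V * Q * Amat V) = (2:ℝ) • ((∑ i, V i * V i) • Amat V) := by
    rw [two_smul, hsum, ← smul_smul]
  exact smul_right_injective _ (two_ne_zero) h2

end Aux2

section Main
variable {K : ℕ} (V : Fin K → ℝ)

lemma Mmat_sq :
    (selH K * Amat V * (selH K)ᵀ) * (selH K * Amat V * (selH K)ᵀ)
      = (∑ i, V i * V i) • (selH K * Amat V * (selH K)ᵀ) := by
  calc (selH K * Amat V * (selH K)ᵀ) * (selH K * Amat V * (selH K)ᵀ)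
      = selH K * (Amat V * ((selH K)ᵀ * selH K) * Amat V) * (selH K)ᵀ := by
        simp only [Matrix.mul_assoc]
    _ = selH K * ((∑ i, V i * V i) • Amat V) * (selH K)ᵀ := by rw [AQA]
    _ = (∑ i, V i * V i) • (selH K * Amat V * (selH K)ᵀ) := by
        rw [Matrix.mul_smul, Matrix.smul_mul]

lemma main_quad (K : ℕ) (V : Fin K → ℝ) :
    ((2 : ℝ) • (1 : Matrix (OrderedPairs K) (OrderedPairs K) ℝ) +
        (2 : ℝ) • (selH K * (1 - commS K) *
          ((1 : Matrix (Fin K) (Fin K) ℝ) ⊗ₖ Matrix.vecMulVec V V) *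
          (1 - commS K) * (selH K)ᵀ)) ^ 2
      - (2 + 2 * (Real.sqrt (1 + ∑ i, V i * V i)) ^ 2) •
        ((2 : ℝ) • (1 : Matrix (OrderedPairs K) (OrderedPairs K) ℝ) +
        (2 : ℝ) • (selH K * (1 - commS K) *
          ((1 : Matrix (Fin K) (Fin K) ℝ) ⊗ₖ Matrix.vecMulVec V V) *
          (1 - commS K) * (selH K)ᵀ)) +
      (4 * (Real.sqrt (1 + ∑ i, V i * V i)) ^ 2) •
        (1 : Matrix (OrderedPairs K) (OrderedPairs K) ℝ) = 0 := by
  have hs0 : (0:ℝ) ≤ ∑ i, V i * V i :=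
    Finset.sum_nonneg fun i _ => mul_self_nonneg _
  have ha : (Real.sqrt (1 + ∑ i, V i * V i)) ^ 2 = 1 + ∑ i, V i * V i :=
    Real.sq_sqrt (by linarith)
  have hMdef : selH K * (1 - commS K) *
      ((1 : Matrix (Fin K) (Fin K) ℝ) ⊗ₖ Matrix.vecMulVec V V) *
      (1 - commS K) * (selH K)ᵀ = selH K * Amat V * (selH K)ᵀ := by
    simp only [Amat, Cmat, Matrix.mul_assoc]
  rw [ha, hMdef]
  set M := selH K * Amat V * (selH K)ᵀ with hM
  have hMM : M * M = (∑ i, V i * V i) • M := Mmat_sq V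
  set s := ∑ i, V i * V i with hsdef
  rw [pow_two]
  simp only [mul_add, add_mul, Matrix.smul_mul, Matrix.mul_smul, one_mul, mul_one, smul_smul]
  rw [hMM]
  module

end Main

/-- **Quadratic (minimal polynomial) identity for `Σ_∞`.**
Fix `K ≥ 2` and `V ∈ ℝ^K`.  With
`Σ_∞ = 2·I_L + 2·H·(I − S)·(I_K ⊗ V·Vᵀ)·(I − S)·Hᵀ` and `a = √(1 + VᵀV)`, the matrix `Σ_∞`
satisfies `Σ_∞² − (2 + 2a²)·Σ_∞ + 4a²·I_L = 0`. -/
theorem limiting_covariance_quadratic_identity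
    (K : ℕ) (hK : 2 ≤ K) (V : Fin K → ℝ) :
    letI Sinf : Matrix (OrderedPairs K) (OrderedPairs K) ℝ :=
      (2 : ℝ) • (1 : Matrix (OrderedPairs K) (OrderedPairs K) ℝ) +
        (2 : ℝ) • (selH K * (1 - commS K) *
          ((1 : Matrix (Fin K) (Fin K) ℝ) ⊗ₖ Matrix.vecMulVec V V) *
          (1 - commS K) * (selH K)ᵀ)
    letI a : ℝ := Real.sqrt (1 + ∑ i, V i * V i)
    Sinf ^ 2 - (2 + 2 * a ^ 2) • Sinf +
      (4 * a ^ 2) • (1 : Matrix (OrderedPairs K) (OrderedPairs K) ℝ) = 0 :=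
  main_quad K V
end

section
/- Fix K ≥ 2, h > 0, a vector V ∈ ℝ^K, and a vector η ∈ ℝ^K with nonnegative entries. With H, S, Q, Q^{1/2}, Δw, Σ^Q_∞ defined as in the context, the entries of Σ^Q_∞ (rows and columns indexed by pairs (i,j) with i < j) are given explicitly as follows. Diagonal entries: (Σ^Q_∞)_{(i,j),(i,j)} = 2·η_i·η_j + (2/h)·η_i·(Δw_j)² + (2/h)·η_j·(Δw_i)². Off-diagonal entries, for (i,j) ≠ (m,n) with i < j and m < n: (Σ^Q_∞)_{(i,j),(m,n)} = 0 if {i,j} ∩ {m,n} = ∅; = (2/h)·η_i·Δw_j·Δw_n if i = m and j ≠ n; = −(2/h)·η_i·Δw_j·Δw_m if i = n and j ≠ m; = −(2/h)·η_j·Δw_i·Δw_n if j = m and i ≠ n; = (2/h)·η_j·Δw_i·Δw_m if j = n and i ≠ m. -/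
open Matrix Kronecker

lemma selH_conj {K : ℕ} (M : Matrix (Fin K × Fin K) (Fin K × Fin K) ℝ)
    (p q : OrderedPairs K) :
    (selH K * M * (selH K)ᵀ) p q = M p.1 q.1 := by
  simp [Matrix.mul_apply, Matrix.transpose_apply, ite_mul, mul_ite]

lemma oneSubS_conj {K : ℕ} (A : Matrix (Fin K × Fin K) (Fin K × Fin K) ℝ)
    (a b : Fin K × Fin K) :
    ((1 - commS K) * A * (1 - commS K)) a b
      = A a b - A a.swap b - A a b.swap + A a.swap b.swap := by
  have hS : ∀ (B : Matrix (Fin K × Fin K) (Fin K × Fin K) ℝ) c d,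
      (commS K * B) c d = B c.swap d := by
    intro B c d
    simp [Matrix.mul_apply]
  have hS' : ∀ (B : Matrix (Fin K × Fin K) (Fin K × Fin K) ℝ) c d,
      (B * commS K) c d = B c d.swap := by
    intro B c d
    simp only [Matrix.mul_apply, commS, Matrix.of_apply, mul_ite, mul_one, mul_zero]
    have he : ∀ x : Fin K × Fin K, (d = x.swap) = (x = d.swap) := by
      intro x
      simp only [eq_iff_iff]
      constructor <;> rintro rfl <;> simp
    simp_rw [he]
    simp
  simp only [Matrix.sub_mul, Matrix.mul_sub, Matrix.one_mul, Matrix.mul_one,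
    Matrix.sub_apply]
  rw [hS, hS', hS', hS]
  ring

/-- **Explicit entries of the limiting covariance matrix `Σ^Q_∞`.**
Fix `K ≥ 2`, `h > 0`, `V ∈ ℝ^K`, and `η ∈ ℝ^K` with nonnegative entries.  With
`Q = diag(η)`, `Q^{1/2} = diag(√η)`, `Δw = √h·Q^{1/2}·V`, and
`Σ^Q_∞ = 2·H·(Q ⊗ Q)·Hᵀ + (2/h)·H·(I − S)·(Q ⊗ (Δw·Δwᵀ))·(I − S)·Hᵀ`,
the entries of `Σ^Q_∞` (rows/columns indexed by pairs `(i,j)` with `i < j`) are: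
diagonal entries `2·η_i·η_j + (2/h)·η_i·(Δw_j)² + (2/h)·η_j·(Δw_i)²`, and for
`(i,j) ≠ (m,n)`: `0` if `{i,j} ∩ {m,n} = ∅`; `(2/h)·η_i·Δw_j·Δw_n` if `i = m, j ≠ n`;
`−(2/h)·η_i·Δw_j·Δw_m` if `i = n, j ≠ m`; `−(2/h)·η_j·Δw_i·Δw_n` if `j = m, i ≠ n`;
`(2/h)·η_j·Δw_i·Δw_m` if `j = n, i ≠ m`. -/
theorem limiting_covariance_entries
    (K : ℕ) (hK : 2 ≤ K) (h : ℝ) (hh : 0 < h) (V η : Fin K → ℝ)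
    (hnonneg : ∀ i, 0 ≤ η i) :
    letI Q : Matrix (Fin K) (Fin K) ℝ := Matrix.diagonal η
    letI Qhalf : Matrix (Fin K) (Fin K) ℝ := Matrix.diagonal fun i => Real.sqrt (η i)
    letI Δw : Fin K → ℝ := Real.sqrt h • Qhalf.mulVec V
    letI SQinf : Matrix (OrderedPairs K) (OrderedPairs K) ℝ :=
      (2 : ℝ) • (selH K * (Q ⊗ₖ Q) * (selH K)ᵀ) +
        (2 / h) • (selH K * (1 - commS K) * (Q ⊗ₖ Matrix.vecMulVec Δw Δw) *
          (1 - commS K) * (selH K)ᵀ)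
    ∀ p q : OrderedPairs K,
      letI i := p.1.1; letI j := p.1.2; letI m := q.1.1; letI n := q.1.2
      (p = q →
        SQinf p q = 2 * η i * η j + (2 / h) * η i * (Δw j) ^ 2 + (2 / h) * η j * (Δw i) ^ 2) ∧
      (i ≠ m → i ≠ n → j ≠ m → j ≠ n → SQinf p q = 0) ∧
      (i = m → j ≠ n → SQinf p q = (2 / h) * η i * Δw j * Δw n) ∧
      (i = n → j ≠ m → SQinf p q = -((2 / h) * η i * Δw j * Δw m)) ∧
      (j = m → i ≠ n → SQinf p q = -((2 / h) * η j * Δw i * Δw n)) ∧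
      (j = n → i ≠ m → SQinf p q = (2 / h) * η j * Δw i * Δw m) := by
  intro p q
  have hij : p.1.1 < p.1.2 := p.2
  have hmn : q.1.1 < q.1.2 := q.2
  set Qm : Matrix (Fin K) (Fin K) ℝ := Matrix.diagonal η with hQ
  set Dw : Fin K → ℝ := Real.sqrt h • (Matrix.diagonal fun i => Real.sqrt (η i)).mulVec V with hDw
  set i := p.1.1
  set j := p.1.2
  set m := q.1.1
  set n := q.1.2
  set A : Matrix (Fin K × Fin K) (Fin K × Fin K) ℝ := Qm ⊗ₖ Matrix.vecMulVec Dw Dw with hA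
  have hassoc : selH K * (1 - commS K) * A * (1 - commS K) * (selH K)ᵀ
      = selH K * ((1 - commS K) * A * (1 - commS K)) * (selH K)ᵀ := by
    simp only [Matrix.mul_assoc]
  have key : (((2 : ℝ) • (selH K * (Qm ⊗ₖ Qm) * (selH K)ᵀ) +
      (2 / h) • (selH K * (1 - commS K) * A * (1 - commS K) * (selH K)ᵀ) :
      Matrix (OrderedPairs K) (OrderedPairs K) ℝ)) p q =
      2 * ((if i = m then η i else 0) * (if j = n then η j else 0)) +
      (2 / h) * ((if i = m then η i else 0) * (Dw j * Dw n)
        - (if j = m then η j else 0) * (Dw i * Dw n)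
        - (if i = n then η i else 0) * (Dw j * Dw m)
        + (if j = n then η j else 0) * (Dw i * Dw m)) := by
    rw [hassoc, Matrix.add_apply, Matrix.smul_apply, Matrix.smul_apply,
      selH_conj, selH_conj, oneSubS_conj]
    have h1 : p.1.swap = (j, i) := rfl
    have h2 : q.1.swap = (n, m) := rfl
    have h3 : p.1 = (i, j) := rfl
    have h4 : q.1 = (m, n) := rfl
    rw [h1, h2, h3, h4]
    simp only [hA, hQ, Matrix.kroneckerMap_apply, Matrix.vecMulVec_apply,
      Matrix.diagonal_apply, smul_eq_mul]
  refine ⟨?_, ?_, ?_, ?_, ?_, ?_⟩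
  · rintro rfl
    have h1 : i ≠ n := hij.ne
    have h2 : j ≠ m := hij.ne'
    rw [key, if_pos rfl, if_pos rfl, if_neg h2, if_neg h1]
    ring
  · intro hn1 hn2 hn3 hn4
    rw [key, if_neg hn1, if_neg hn4, if_neg hn3, if_neg hn2]
    ring
  · intro he hne
    have h2 : j ≠ m := fun hjm => absurd (he ▸ hjm ▸ hij) (lt_irrefl _)
    have h3 : i ≠ n := fun hin => absurd (he ▸ hin ▸ hmn) (lt_irrefl _)
    rw [key, if_pos he, if_neg hne, if_neg h2, if_neg h3]
    ring
  · intro he hne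
    have h1 : i ≠ m := fun him => absurd (him ▸ he ▸ hmn) (lt_irrefl _)
    have h4 : j ≠ n := fun hjn => absurd (he ▸ hjn ▸ hij) (lt_irrefl _)
    rw [key, if_neg h1, if_neg h4, if_neg hne, if_pos he, he]
    ring
  · intro he hne
    have h1 : i ≠ m := fun him => absurd (him ▸ he ▸ hij) (lt_irrefl _)
    have h4 : j ≠ n := fun hjn => absurd (he ▸ hjn ▸ hmn) (lt_irrefl _)
    rw [key, if_neg h1, if_neg h4, if_pos he, if_neg hne, he]
    ring
  · intro he hne
    have h2 : j ≠ m := fun hjm => absurd (hjm ▸ he ▸ hmn) (lt_irrefl _)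
    have h3 : i ≠ n := fun hin => absurd (hin ▸ he ▸ hij) (lt_irrefl _)
    rw [key, if_neg hne, if_pos he, if_neg h2, if_neg h3, he]
    ring
end
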